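/- arXiv:2510.26291 — 3 statements merged into one kernel-verified Lean document; each statement's English description precedes it below -/
import Mathlib

section
/- For any odd integer n ≥ 1, the alternating sum ∑_{j=1}^{n} (-1)^{j+1} ⌊√(j·n)⌋ equals (n+1)/2. -/
open Finset

private lemma ceil_le_iff (n k j : ℕ) (hn : 0 < n) :
    (k * k + n - 1) / n ≤ j ↔ k * k ≤ j * n := by
  rw [Nat.div_le_iff_le_mul_add_pred hn, mul_comm j n]
  set a := k * k
  set b := n * j
  omega

private lemma sumA (m n : ℕ) (hm : 1 ≤ m) (hmn : m ≤ n) (hn : Odd n) :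
    ∑ j ∈ Icc m n, (-1 : ℤ) ^ (j + 1) = if Odd m then 1 else 0 := by
  have hev : Even (n + 1) := Odd.add_one hn
  rw [← Finset.Ico_add_one_right_eq_Icc, Finset.sum_Ico_eq_sub _ (by omega)]
  simp only [pow_succ, ← Finset.sum_mul, neg_one_geom_sum]
  rcases Nat.even_or_odd m with he | ho
  · simp [he, Nat.not_odd_iff_even.mpr he, hev]
  · simp [Nat.not_even_iff_odd.mpr ho, ho, hev]

private lemma ceil_split (n x : ℕ) (hn : 0 < n) :
    (x + n - 1) / n = x / n + (x % n + n - 1) / n := by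
  rw [show x + n - 1 = n * (x / n) + (x % n + n - 1) from by
        have := Nat.div_add_mod x n; omega,
      Nat.mul_add_div hn]

private lemma key_parity (n k : ℕ) (hn : Odd n) (hk1 : 1 ≤ k) (hkn : k ≤ n - 1) :
    Odd ((k * k + n - 1) / n + ((n - k) * (n - k) + n - 1) / n) := by
  have hn0 : 0 < n := hn.pos
  set a := k * k with ha
  set b := (n - k) * (n - k) with hb
  have hkn' : k ≤ n := by omega
  obtain ⟨d, hd⟩ : ∃ d, n = d + k := ⟨n - k, by omega⟩
  have hab : b + 2 * k * n = n * n + a := by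
    rw [ha, hb, hd, Nat.add_sub_cancel]
    ring
  have hmod : b % n = a % n := by
    have h1 : (b + 2 * k * n) % n = b % n := Nat.add_mul_mod_self_right b (2 * k) n
    have h2 : (n * n + a) % n = a % n := Nat.mul_add_mod n n a
    rw [← h1, hab, h2]
  -- parity of a + b
  have hodd_ab : Odd (a + b) := by
    rcases Nat.even_or_odd k with hk | hk
    · have h1 : Even a := hk.mul_right k
      have h2 : Odd (n - k) := Nat.Odd.sub_even hkn' hn hk
      exact h1.add_odd (h2.mul h2)
    · have h1 : Odd a := hk.mul hk
      have h2 : Even (n - k) := Nat.Odd.sub_odd hn hk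
      exact h1.add_even (h2.mul_right _)
  -- parity of a / n + b / n
  have hda := Nat.div_add_mod a n
  have hdb := Nat.div_add_mod b n
  have hq : n * (a / n + b / n) = a + b - 2 * (a % n) := by
    rw [mul_add]; omega
  have hle : 2 * (a % n) ≤ a + b := by
    have := Nat.mod_le a n; have := Nat.mod_le b n; omega
  have hqodd : Odd (a / n + b / n) := by
    have h3 : Odd (n * (a / n + b / n)) := by
      rw [hq]; exact Nat.Odd.sub_even hle hodd_ab (even_two_mul _)
    exact (Nat.odd_mul.mp h3).2
  rw [ceil_split n a hn0, ceil_split n b hn0, hmod]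
  have hre : a / n + (a % n + n - 1) / n + (b / n + (a % n + n - 1) / n)
      = a / n + b / n + 2 * ((a % n + n - 1) / n) := by ring
  rw [hre]
  exact hqodd.add_even (even_two_mul _)

theorem alternating_sum_floor_sqrt (n : ℕ) (hn : Odd n) (h1 : 1 ≤ n) :
    ∑ j ∈ Finset.Icc 1 n, (-1 : ℤ) ^ (j + 1) * ⌊Real.sqrt (j * n)⌋ = (n + 1) / 2 := by
  have hn0 : 0 < n := h1
  -- Step 1: rewrite floor of sqrt as a counting sum
  have hfl : ∀ j ∈ Finset.Icc 1 n, (-1 : ℤ) ^ (j + 1) * ⌊Real.sqrt (j * n)⌋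
      = ∑ k ∈ Finset.Icc 1 n, (-1 : ℤ) ^ (j + 1) * (if k * k ≤ j * n then 1 else 0) := by
    intro j hj
    rw [← Finset.mul_sum]
    congr 1
    rw [show ((j : ℝ) * (n : ℝ)) = (((j * n : ℕ) : ℝ)) from by push_cast; ring,
      Real.floor_real_sqrt_eq_nat_sqrt]
    have hsub : Finset.filter (fun k => k * k ≤ j * n) (Finset.Icc 1 n)
        = Finset.Icc 1 (Nat.sqrt (j * n)) := by
      ext k
      simp only [Finset.mem_filter, Finset.mem_Icc, Nat.le_sqrt]
      constructor
      · rintro ⟨⟨h1k, _⟩, h⟩; exact ⟨h1k, h⟩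
      · rintro ⟨h1k, h⟩
        have hjn : j ≤ n := (Finset.mem_Icc.mp hj).2
        refine ⟨⟨h1k, ?_⟩, h⟩
        nlinarith
    rw [Finset.sum_boole, hsub, Nat.card_Icc]
    push_cast
    omega
  rw [Finset.sum_congr rfl hfl, Finset.sum_comm]
  -- Step 2: inner sum
  have hinner : ∀ k ∈ Finset.Icc 1 n,
      ∑ j ∈ Finset.Icc 1 n, (-1 : ℤ) ^ (j + 1) * (if k * k ≤ j * n then 1 else 0)
      = if Odd ((k * k + n - 1) / n) then 1 else 0 := by
    intro k hk
    obtain ⟨hk1, hkn⟩ := Finset.mem_Icc.mp hk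
    have hkk : 1 ≤ k * k := Nat.mul_pos hk1 hk1
    have hm1 : 1 ≤ (k * k + n - 1) / n := (Nat.one_le_div_iff hn0).mpr (by omega)
    have hmn : (k * k + n - 1) / n ≤ n := by
      rw [ceil_le_iff n k n hn0]; nlinarith
    simp only [mul_ite, mul_one, mul_zero]
    rw [← Finset.sum_filter]
    have hfilter : Finset.filter (fun j => k * k ≤ j * n) (Finset.Icc 1 n)
        = Finset.Icc ((k * k + n - 1) / n) n := by
      ext j
      simp only [Finset.mem_filter, Finset.mem_Icc, ← ceil_le_iff n k j hn0]
      omega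
    rw [hfilter]
    exact sumA _ n hm1 hmn hn
  rw [Finset.sum_congr rfl hinner]
  -- Step 3: split off k = n and pair the rest
  have htop : ((n * n + n - 1) / n) = n := by
    rw [show n * n + n - 1 = n * n + (n - 1) from by omega, Nat.mul_add_div hn0,
      Nat.div_eq_of_lt (by omega), add_zero]
  have hsplit : Finset.Icc 1 n = insert n (Finset.Icc 1 (n - 1)) := by
    ext x
    simp only [Finset.mem_insert, Finset.mem_Icc]
    omega
  rw [hsplit, Finset.sum_insert (by simp [Finset.mem_Icc]; omega)]
  have hfn : (if Odd ((n * n + n - 1) / n) then (1 : ℤ) else 0) = 1 := by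
    rw [htop, if_pos hn]
  rw [hfn]
  -- Pairing on Icc 1 (n-1)
  set f : ℕ → ℤ := fun k => if Odd ((k * k + n - 1) / n) then 1 else 0 with hf
  have hrefl : ∑ k ∈ Finset.Icc 1 (n - 1), f (n - k) = ∑ k ∈ Finset.Icc 1 (n - 1), f k := by
    apply Finset.sum_nbij' (i := fun k => n - k) (j := fun k => n - k) <;>
      (intro a ha; simp only [Finset.mem_Icc] at *) <;>
      first
        | rfl
        | omega
  have hpair : ∀ k ∈ Finset.Icc 1 (n - 1), f k + f (n - k) = 1 := by
    intro k hk
    obtain ⟨hk1, hkn⟩ := Finset.mem_Icc.mp hk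
    have hodd := key_parity n k hn hk1 hkn
    rw [Nat.odd_iff] at hodd
    simp only [hf, Nat.odd_iff]
    split_ifs with h1 h2 h2 <;> omega
  have h2T : 2 * ∑ k ∈ Finset.Icc 1 (n - 1), f k = (n : ℤ) - 1 := by
    have : ∑ k ∈ Finset.Icc 1 (n - 1), (f k + f (n - k)) = ∑ k ∈ Finset.Icc 1 (n - 1), 1 :=
      Finset.sum_congr rfl hpair
    rw [Finset.sum_add_distrib, hrefl, Finset.sum_const, Nat.card_Icc, nsmul_eq_mul] at this
    rw [two_mul, this]
    push_cast
    omega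
  set T := ∑ k ∈ Finset.Icc 1 (n - 1), f k with hT
  omega
end

section
/- For any odd integer n ≥ 1, the number of integers k with 1 ≤ k ≤ n for which ⌈k²/n⌉ is odd equals (n+1)/2. -/
lemma ceil_swap (n k : ℕ) (hk1 : 1 ≤ k) (hk2 : k ≤ n - 1) :
    ⌈(((n - k : ℕ) : ℚ) ^ 2 / (n : ℚ))⌉ = (n : ℤ) - 2 * k + ⌈((k : ℚ) ^ 2 / (n : ℚ))⌉ := by
  have h1 : 1 ≤ n := by omega
  have hkn : k ≤ n := by omega
  have hn0 : (n : ℚ) ≠ 0 := by positivity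
  have hcast : ((n - k : ℕ) : ℚ) = (n : ℚ) - k := by
    push_cast [Nat.cast_sub hkn]; ring
  rw [hcast]
  have key : ((n : ℚ) - k) ^ 2 / n = (k : ℚ) ^ 2 / n + (((n : ℤ) - 2 * k : ℤ) : ℚ) := by
    field_simp
    push_cast
    ring
  rw [key, Int.ceil_add_intCast]
  ring

theorem card_odd_ceil_sq_div (n : ℕ) (hn : Odd n) (h1 : 1 ≤ n) :
    ((Finset.Icc 1 n).filter (fun k : ℕ => Odd ⌈((k : ℚ) ^ 2 / (n : ℚ))⌉)).card = (n + 1) / 2 := by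
  have hn0 : (n : ℚ) ≠ 0 := by positivity
  have hnoddZ : Odd (n : ℤ) := by exact_mod_cast hn
  -- key parity swap on Icc 1 (n-1)
  have hswap : ∀ k, 1 ≤ k → k ≤ n - 1 →
      (Odd ⌈(((n - k : ℕ) : ℚ) ^ 2 / (n : ℚ))⌉ ↔ ¬ Odd ⌈((k : ℚ) ^ 2 / (n : ℚ))⌉) := by
    intro k hk1 hk2
    rw [ceil_swap n k hk1 hk2]
    have hodd : Odd ((n : ℤ) - 2 * k) := by
      rcases hnoddZ with ⟨m, hm⟩
      exact ⟨m - k, by omega⟩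
    rcases hodd with ⟨b, hb⟩
    constructor
    · rintro ⟨a, ha⟩ ⟨c, hc⟩
      omega
    · intro h
      rcases Int.even_or_odd ⌈((k : ℚ) ^ 2 / (n : ℚ))⌉ with ⟨c, hc⟩ | ho
      · exact ⟨b + c, by omega⟩
      · exact absurd ho h
  have hcard_eq :
      ((Finset.Icc 1 (n - 1)).filter (fun k : ℕ => Odd ⌈((k : ℚ) ^ 2 / (n : ℚ))⌉)).card
        = ((Finset.Icc 1 (n - 1)).filter (fun k : ℕ => ¬ Odd ⌈((k : ℚ) ^ 2 / (n : ℚ))⌉)).card := by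
    apply Finset.card_bij' (fun k _ => n - k) (fun k _ => n - k)
    · intro a ha
      simp only [Finset.mem_filter, Finset.mem_Icc] at ha ⊢
      refine ⟨⟨by omega, by omega⟩, ?_⟩
      rw [not_iff_not.mpr (hswap a ha.1.1 ha.1.2)]
      simpa using ha.2
    · intro a ha
      simp only [Finset.mem_filter, Finset.mem_Icc] at ha ⊢
      exact ⟨⟨by omega, by omega⟩, (hswap a ha.1.1 ha.1.2).mpr ha.2⟩
    · intro a ha
      simp only [Finset.mem_filter, Finset.mem_Icc] at ha
      omega
    · intro a ha
      simp only [Finset.mem_filter, Finset.mem_Icc] at ha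
      omega
  have hsum :
      ((Finset.Icc 1 (n - 1)).filter (fun k : ℕ => Odd ⌈((k : ℚ) ^ 2 / (n : ℚ))⌉)).card
        + ((Finset.Icc 1 (n - 1)).filter (fun k : ℕ => ¬ Odd ⌈((k : ℚ) ^ 2 / (n : ℚ))⌉)).card
        = n - 1 := by
    rw [Finset.card_filter_add_card_filter_not]
    simp [Nat.card_Icc]
  -- n itself satisfies the predicate
  have hPn : Odd ⌈((n : ℚ) ^ 2 / (n : ℚ))⌉ := by
    have heq : ((n : ℚ)) ^ 2 / n = (n : ℚ) := by field_simp
    rw [heq, Int.ceil_natCast]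
    exact_mod_cast hn
  have hins : Finset.Icc 1 n = insert n (Finset.Icc 1 (n - 1)) := by
    ext x
    simp only [Finset.mem_Icc, Finset.mem_insert]
    omega
  have hnotmem : n ∉ (Finset.Icc 1 (n - 1)).filter
      (fun k : ℕ => Odd ⌈((k : ℚ) ^ 2 / (n : ℚ))⌉) := by
    simp only [Finset.mem_filter, Finset.mem_Icc]
    omega
  rw [hins, Finset.filter_insert, if_pos hPn, Finset.card_insert_of_notMem hnotmem]
  rcases hn with ⟨m, hm⟩
  omega
end

section
/- If p is a prime with p ≡ 1 (mod 4), then ∑_{j=1}^{(p-1)/4} ⌊√(j·p)⌋ = (p² − 1)/12. -/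
open Finset

private lemma pz_sum_sq (n : ℕ) : 6 * ∑ y ∈ Icc 1 n, y^2 = n*(n+1)*(2*n+1) := by
  induction n with
  | zero => simp
  | succ k ih =>
    rw [Finset.sum_Icc_succ_top (by omega), Nat.mul_add, ih]
    ring

private lemma pz_sq_inj_aux (p : ℕ) (hp : p.Prime) {M y z : ℕ}
    (hy : 1 ≤ y) (hz : z ≤ M) (h2M : 2*M < p) (hle : y ≤ z)
    (h : y^2 % p = z^2 % p) : y = z := by
  have hsq : y^2 ≤ z^2 := Nat.pow_le_pow_left hle 2
  have hdvd : p ∣ z^2 - y^2 := (Nat.modEq_iff_dvd' hsq).mp h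
  rw [Nat.sq_sub_sq] at hdvd
  rcases (Nat.Prime.dvd_mul hp).mp hdvd with h1 | h1
  · exfalso; have := Nat.le_of_dvd (by omega) h1; omega
  · have := Nat.eq_zero_of_dvd_of_lt h1 (by omega)
    omega

private lemma pz_sq_inj (p : ℕ) (hp : p.Prime) {M y z : ℕ}
    (hy : y ∈ Icc 1 M) (hz : z ∈ Icc 1 M) (h2M : 2*M < p)
    (h : y^2 % p = z^2 % p) : y = z := by
  simp only [mem_Icc] at hy hz
  rcases le_total y z with hle | hle
  · exact pz_sq_inj_aux p hp hy.1 hz.2 h2M hle h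
  · exact (pz_sq_inj_aux p hp hz.1 hy.2 h2M hle h.symm).symm

private lemma pz_closure (p : ℕ) (hp : p.Prime) (h4 : p % 4 = 1) {m y : ℕ}
    (hm : p = 4*m+1) (hm1 : 1 ≤ m) (hy : y ∈ Icc 1 (2*m)) :
    ∃ y' ∈ Icc 1 (2*m), y'^2 % p = p - y^2 % p := by
  haveI : Fact p.Prime := ⟨hp⟩
  simp only [mem_Icc] at hy
  obtain ⟨i, hi⟩ := ZMod.exists_sq_eq_neg_one_iff.mpr (by omega : p % 4 ≠ 3)
  set c := i.val with hc
  have hci : (c : ZMod p) = i := by simp [hc, ZMod.natCast_val, ZMod.cast_id]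
  have hc2 : (c : ZMod p)^2 = -1 := by rw [hci, pow_two]; exact hi.symm
  have hpc : ¬ p ∣ c := by
    rw [← ZMod.natCast_eq_zero_iff]
    intro h0
    rw [h0] at hc2
    simp at hc2
  have hpy : ¬ p ∣ y := fun h => by have := Nat.le_of_dvd (by omega) h; omega
  set t := (c * y) % p with ht
  have htp : t < p := Nat.mod_lt _ (by omega)
  have ht0 : t ≠ 0 := by
    intro h0
    have : p ∣ c * y := Nat.dvd_of_mod_eq_zero h0
    rcases (Nat.Prime.dvd_mul hp).mp this with h | h
    · exact hpc h
    · exact hpy h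
  have htz : (t : ZMod p) = (c : ZMod p) * y := by rw [ht]; push_cast [ZMod.natCast_mod]; ring
  set y' := if t ≤ 2*m then t else p - t with hy'
  have hy'mem : y' ∈ Icc 1 (2*m) := by
    rw [hy']; split <;> (simp only [mem_Icc]; omega)
  have hy'z : ((y' : ℕ) : ZMod p)^2 = -((y:ℕ) : ZMod p)^2 := by
    have hts : (t : ZMod p)^2 = -((y:ℕ) : ZMod p)^2 := by
      rw [htz, mul_pow, hc2]; ring
    rw [hy']; split
    · exact hts
    · have : (((p - t : ℕ)) : ZMod p) = -(t : ZMod p) := by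
        push_cast [Nat.cast_sub htp.le, ZMod.natCast_self]; ring
      rw [this, neg_pow, hts]; ring
  refine ⟨y', hy'mem, ?_⟩
  have hr1 : 1 ≤ y^2 % p := by
    rcases Nat.eq_zero_or_pos (y^2 % p) with h0 | h0
    · exfalso
      have : p ∣ y^2 := Nat.dvd_of_mod_eq_zero h0
      exact hpy (hp.dvd_of_dvd_pow this)
    · exact h0
  have hrp : y^2 % p < p := Nat.mod_lt _ (by omega)
  have key : ((y'^2 : ℕ) : ZMod p) = ((p - y^2 % p : ℕ) : ZMod p) := by
    push_cast [Nat.cast_sub hrp.le, ZMod.natCast_self, ZMod.natCast_mod]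
    rw [hy'z]; push_cast; ring
  have := (ZMod.natCast_eq_natCast_iff' _ _ _).mp key
  rwa [Nat.mod_eq_of_lt (show p - y^2 % p < p by omega)] at this

private lemma pz_residue_sum (p : ℕ) (hp : p.Prime) (h4 : p % 4 = 1) {m : ℕ}
    (hm : p = 4*m+1) (hm1 : 1 ≤ m) :
    ∑ y ∈ Icc 1 (2*m), y^2 % p = p * m := by
  classical
  set E := (Icc 1 (2*m)).image (fun y => y^2 % p) with hE
  have hinj : ∀ y ∈ Icc 1 (2*m), ∀ z ∈ Icc 1 (2*m), y^2 % p = z^2 % p → y = z :=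
    fun y hy z hz h => pz_sq_inj p hp hy hz (by omega) h
  have hsum : ∑ r ∈ E, r = ∑ y ∈ Icc 1 (2*m), y^2 % p :=
    Finset.sum_image hinj
  have hcard : E.card = 2*m := by
    rw [hE, Finset.card_image_of_injOn (fun y hy z hz h => hinj y hy z hz h), Nat.card_Icc]
    omega
  have hmemr : ∀ r ∈ E, 1 ≤ r ∧ r < p := by
    intro r hr
    simp only [hE, mem_image] at hr
    obtain ⟨y, hy, rfl⟩ := hr
    simp only [mem_Icc] at hy
    have hpy : ¬ p ∣ y := fun h => by have := Nat.le_of_dvd (by omega) h; omega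
    refine ⟨?_, Nat.mod_lt _ (by omega)⟩
    rcases Nat.eq_zero_or_pos (y^2 % p) with h0 | h0
    · exact absurd (hp.dvd_of_dvd_pow (Nat.dvd_of_mod_eq_zero h0)) hpy
    · exact h0
  have hclos : ∀ r ∈ E, p - r ∈ E := by
    intro r hr
    simp only [hE, mem_image] at hr ⊢
    obtain ⟨y, hy, rfl⟩ := hr
    obtain ⟨y', hy', h⟩ := pz_closure p hp h4 hm hm1 hy
    exact ⟨y', hy', h⟩
  have hinv : ∑ r ∈ E, (2*(r:ℤ) - p) = 0 := by
    apply Finset.sum_involution (fun r _ => p - r)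
    · intro a ha
      have h1 := hmemr a ha
      push_cast [Nat.cast_sub (by omega : a ≤ p)]
      ring
    · intro a ha _
      have h1 := hmemr a ha
      omega
    · intro a ha; exact hclos a ha
    · intro a ha; have h1 := hmemr a ha; omega
  have h2 : 2 * (∑ r ∈ E, (r:ℤ)) = (p:ℤ) * (2*m) := by
    rw [Finset.sum_sub_distrib, Finset.sum_const, ← Finset.mul_sum, hcard] at hinv
    push_cast [nsmul_eq_mul] at hinv ⊢
    linarith
  have h3 : 2 * (∑ r ∈ E, r) = 2 * (p * m) := by
    have : ((2 * ∑ r ∈ E, r : ℕ) : ℤ) = ((2 * (p*m) : ℕ) : ℤ) := by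
      push_cast
      rw [h2]; ring
    exact_mod_cast this
  rw [← hsum]
  omega

private lemma pz_count (p : ℕ) (hp : p.Prime) (h4 : p % 4 = 1) {m : ℕ}
    (hm : p = 4*m+1) (hm1 : 1 ≤ m) :
    12 * (∑ j ∈ Icc 1 m, Nat.sqrt (j*p)) + 1 = p*p := by
  classical
  subst hm
  have hp0 : 0 < 4*m+1 := by omega
  have hC : ∀ j ∈ Icc 1 m, Nat.sqrt (j*(4*m+1))
      = ((Icc 1 (2*m)).filter (fun y => y^2 ≤ j*(4*m+1))).card := by
    intro j hj
    simp only [mem_Icc] at hj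
    have hs : Nat.sqrt (j*(4*m+1)) ≤ 2*m := by
      have h1 : j*(4*m+1) ≤ m*(4*m+1) := Nat.mul_le_mul_right _ hj.2
      have h2 : Nat.sqrt (j*(4*m+1)) < 2*m+1 := by
        rw [Nat.sqrt_lt']
        calc j*(4*m+1) ≤ m*(4*m+1) := h1
          _ < (2*m+1)^2 := by nlinarith
      omega
    have he : (Icc 1 (2*m)).filter (fun y => y^2 ≤ j*(4*m+1))
        = Icc 1 (Nat.sqrt (j*(4*m+1))) := by
      ext y
      simp only [mem_filter, mem_Icc, ← Nat.le_sqrt']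
      omega
    rw [he, Nat.card_Icc]
    omega
  have hdm : ∀ y ∈ Icc 1 (2*m), y^2/(4*m+1) < m := by
    intro y hy
    simp only [mem_Icc] at hy
    rw [Nat.div_lt_iff_lt_mul hp0]
    have h2 : y^2 ≤ (2*m)^2 := Nat.pow_le_pow_left hy.2 2
    nlinarith
  have hE : ∀ y ∈ Icc 1 (2*m),
      ((Icc 1 m).filter (fun j => y^2 ≤ j*(4*m+1))).card = m - y^2/(4*m+1) := by
    intro y hy
    have hdmy := hdm y hy
    simp only [mem_Icc] at hy
    have hpy : ¬ (4*m+1) ∣ y := fun h => by have := Nat.le_of_dvd (by omega) h; omega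
    have hne : ∀ j, y^2 ≠ j*(4*m+1) := by
      intro j h
      exact hpy (hp.dvd_of_dvd_pow (h ▸ Dvd.intro_left j rfl))
    have hiff : ∀ j, (y^2 ≤ j*(4*m+1) ↔ y^2/(4*m+1) < j) := by
      intro j
      rw [Nat.div_lt_iff_lt_mul hp0]
      constructor
      · intro h
        rcases Nat.lt_or_ge (y^2) (j*(4*m+1)) with h'|h'
        · exact h'
        · exact absurd (le_antisymm h h') (hne j)
      · omega
    have he : (Icc 1 m).filter (fun j => y^2 ≤ j*(4*m+1)) = Icc (y^2/(4*m+1) + 1) m := by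
      ext j
      simp only [mem_filter, mem_Icc, hiff]
      generalize y ^ 2 / (4 * m + 1) = d
      omega
    rw [he, Nat.card_Icc]
    omega
  have hswap : ∑ j ∈ Icc 1 m, Nat.sqrt (j*(4*m+1))
      = ∑ y ∈ Icc 1 (2*m), (m - y^2/(4*m+1)) := by
    rw [Finset.sum_congr rfl hC]
    simp only [Finset.card_filter]
    rw [Finset.sum_comm]
    refine Finset.sum_congr rfl ?_
    intro y hy
    rw [← Finset.card_filter, hE y hy]
  have hT : ∑ y ∈ Icc 1 (2*m), (m - y^2/(4*m+1)) + ∑ y ∈ Icc 1 (2*m), y^2/(4*m+1)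
      = 2*(m*m) := by
    rw [← Finset.sum_add_distrib,
      Finset.sum_congr rfl (fun y hy => Nat.sub_add_cancel (hdm y hy).le),
      Finset.sum_const, Nat.card_Icc, smul_eq_mul]
    rw [show 2*m+1-1 = 2*m from by omega]
    ring
  have hF : (4*m+1) * (∑ y ∈ Icc 1 (2*m), y^2/(4*m+1)) + ∑ y ∈ Icc 1 (2*m), y^2 % (4*m+1)
      = ∑ y ∈ Icc 1 (2*m), y^2 := by
    rw [Finset.mul_sum, ← Finset.sum_add_distrib]
    exact Finset.sum_congr rfl (fun y _ => Nat.div_add_mod _ _)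
  have hQ := pz_sum_sq (2*m)
  have hR := pz_residue_sum (4*m+1) hp h4 rfl hm1
  rw [hR] at hF
  rw [hswap]
  set S := ∑ y ∈ Icc 1 (2*m), (m - y^2/(4*m+1)) with hS
  set T := ∑ y ∈ Icc 1 (2*m), y^2/(4*m+1) with hT'
  set Q := ∑ y ∈ Icc 1 (2*m), y^2 with hQ'
  -- hT : S + T = 2*(m*m), hF : (4m+1)*T + (4m+1)*m = Q, hQ : 6*Q = 2m*(2m+1)*(4m+1)
  have h6 : 6*S*(4*m+1) = (8*m^2+4*m)*(4*m+1) := by nlinarith [hT, hF, hQ]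
  have h6' : 6*S = 8*m^2+4*m := Nat.eq_of_mul_eq_mul_right (by omega) h6
  nlinarith [h6']

theorem polya_szego_sum_floor_sqrt (p : ℕ) (hp : p.Prime) (h4 : p % 4 = 1) :
    ∑ j ∈ Finset.Icc 1 ((p - 1) / 4), ⌊Real.sqrt (j * p)⌋ = ((p : ℤ) ^ 2 - 1) / 12 := by
  have hp2 := hp.two_le
  have hp5 : 5 ≤ p := by
    rcases Nat.lt_or_ge p 5 with h | h
    · interval_cases p <;> omega
    · exact h
  set m := (p-1)/4 with hmdef
  have hm : p = 4*m+1 := by omega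
  have hm1 : 1 ≤ m := by omega
  have hA : ∀ j ∈ Finset.Icc 1 m, ⌊Real.sqrt (j * p)⌋ = ((Nat.sqrt (j*p) : ℕ) : ℤ) := by
    intro j _
    rw [show ((j:ℝ) * p) = ((j*p : ℕ) : ℝ) by push_cast; ring,
      Real.floor_real_sqrt_eq_nat_sqrt]
  rw [Finset.sum_congr rfl hA, ← Nat.cast_sum]
  have hmain := pz_count p hp h4 hm hm1
  have hmain' : 12 * ((∑ j ∈ Icc 1 m, Nat.sqrt (j*p) : ℕ) : ℤ) + 1 = (p:ℤ)*(p:ℤ) := by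
    exact_mod_cast hmain
  rw [sq]
  omega
end
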